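/- There is no hyponormal Toeplitz completion of the partial matrix [[T_z, ?],[?, T_{z̄}]]: for any φ, ψ ∈ L^∞, the block operator [[T_z, T_φ],[T_ψ, T_{z̄}]] on H² ⊕ H² is not hyponormal. -/

import Mathlib

open MeasureTheory Complex Real InnerProductSpace Submodule

set_option maxHeartbeats 1000000
set_option synthInstance.maxHeartbeats 200000

noncomputable section

namespace BlockToeplitz

instance fact2pi : Fact (0 < 2 * π) := ⟨by positivity⟩

/-- The unit circle, as the additive circle `ℝ / 2πℤ`. -/
abbrev 𝕋 : Type := AddCircle (2 * π)

/-- Normalized Haar (Lebesgue) measure on the circle. -/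
abbrev μ𝕋 : Measure 𝕋 := AddCircle.haarAddCircle

section Pointwise

variable {E F : Type*} [NormedAddCommGroup E] [NormedSpace ℂ E]
  [NormedAddCommGroup F] [NormedSpace ℂ F]

theorem memLp_pointwise {Φ : 𝕋 → (E →L[ℂ] F)} (hm : AEStronglyMeasurable Φ μ𝕋)
    {C : ℝ} (hC : ∀ x, ‖Φ x‖ ≤ C) (f : Lp E 2 μ𝕋) :
    MemLp (fun x => Φ x (f x)) 2 μ𝕋 := by
  refine MemLp.of_le_mul (c := C) (Lp.memLp f) ?_ ?_
  · exact isBoundedBilinearMap_apply.continuous.comp_aestronglyMeasurable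
      (hm.prodMk (Lp.aestronglyMeasurable f))
  · refine Filter.Eventually.of_forall fun x => ?_
    exact (ContinuousLinearMap.le_opNorm _ _).trans
      (mul_le_mul_of_nonneg_right (hC x) (norm_nonneg _))

/-- The operator on `L²` of pointwise application of a uniformly bounded family of
operators (e.g. multiplication by an `L^∞` matrix function). -/
def pointwiseCLM (Φ : 𝕋 → (E →L[ℂ] F)) (hm : AEStronglyMeasurable Φ μ𝕋)
    {C : ℝ} (hC : ∀ x, ‖Φ x‖ ≤ C) : Lp E 2 μ𝕋 →L[ℂ] Lp F 2 μ𝕋 :=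
  LinearMap.mkContinuous
    { toFun := fun f => (memLp_pointwise hm hC f).toLp _
      map_add' := fun f g => by
        rw [← MemLp.toLp_add (memLp_pointwise hm hC f) (memLp_pointwise hm hC g)]
        refine MemLp.toLp_congr _ _ ?_
        filter_upwards [Lp.coeFn_add f g] with x hx
        simp only [hx, Pi.add_apply, map_add]
      map_smul' := fun c f => by
        try dsimp only
        rw [RingHom.id_apply, ← MemLp.toLp_const_smul c (memLp_pointwise hm hC f)]
        refine MemLp.toLp_congr _ _ ?_
        filter_upwards [Lp.coeFn_smul c f] with x hx
        simp only [hx, Pi.smul_apply, ContinuousLinearMap.map_smul] }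
    (max C 0)
    (by
      intro f
      simp only [LinearMap.coe_mk, AddHom.coe_mk]
      rw [Lp.norm_toLp]
      have hb : eLpNorm (fun x => Φ x (f x)) 2 μ𝕋
          ≤ ENNReal.ofReal (max C 0) * eLpNorm (f : 𝕋 → E) 2 μ𝕋 := by
        refine eLpNorm_le_mul_eLpNorm_of_ae_le_mul ?_ 2
        refine Filter.Eventually.of_forall fun x => ?_
        exact (ContinuousLinearMap.le_opNorm _ _).trans
          (mul_le_mul_of_nonneg_right ((hC x).trans (le_max_left _ _)) (norm_nonneg _))
      calc (eLpNorm (fun x => Φ x (f x)) 2 μ𝕋).toReal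
          ≤ (ENNReal.ofReal (max C 0) * eLpNorm (f : 𝕋 → E) 2 μ𝕋).toReal := by
            refine ENNReal.toReal_mono ?_ hb
            exact ENNReal.mul_ne_top ENNReal.ofReal_ne_top (Lp.eLpNorm_ne_top f)
        _ = max C 0 * ‖f‖ := by
            rw [ENNReal.toReal_mul, ENNReal.toReal_ofReal (le_max_right C 0), Lp.norm_def])

@[simp] theorem pointwiseCLM_apply (Φ : 𝕋 → (E →L[ℂ] F)) (hm : AEStronglyMeasurable Φ μ𝕋)
    {C : ℝ} (hC : ∀ x, ‖Φ x‖ ≤ C) (f : Lp E 2 μ𝕋) :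
    pointwiseCLM Φ hm hC f = (memLp_pointwise hm hC f).toLp _ := rfl

end Pointwise

end BlockToeplitz

namespace BlockToeplitz
open scoped ComplexConjugate

variable {ι : Type} [Fintype ι]

/-- `ℂ^ι`. -/
abbrev V (ι : Type) [Fintype ι] : Type := EuclideanSpace ℂ ι

/-- The space `L²(𝕋, ℂ^ι)`. -/
abbrev L2 (ι : Type) [Fintype ι] : Type := Lp (V ι) 2 μ𝕋

/-- The vector-valued trigonometric monomial `z^k ⊗ e_i` as an element of `L²`. -/
def fourierV (ι : Type) [Fintype ι] [DecidableEq ι] (k : ℤ) (i : ι) : L2 ι :=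
  (ContinuousMap.toLp (E := V ι) 2 μ𝕋 ℂ)
    ⟨fun x => fourier k x • EuclideanSpace.single i 1,
      (map_continuous (fourier k)).smul continuous_const⟩

/-- The span of the analytic-negative monomials. -/
def negSpan (ι : Type) [Fintype ι] : Submodule ℂ (L2 ι) :=
  Submodule.span ℂ
    {f | ∃ k : ℤ, k < 0 ∧ ∃ i : ι, f = @fourierV ι _ (Classical.decEq ι) k i}

/-- The vector-valued Hardy space `H²(𝕋, ℂ^ι)`, i.e. the orthogonal complement in
`L²` of the span of the monomials `z^k ⊗ e_i`, `k < 0`. -/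
def hardy (ι : Type) [Fintype ι] : Submodule ℂ (L2 ι) := (negSpan ι)ᗮ

/-- The Hardy space as a Hilbert space. -/
abbrev H2 (ι : Type) [Fintype ι] : Type := ↥(hardy ι)

instance : CompleteSpace (H2 ι) := by
  unfold H2 hardy; infer_instance

instance : HasOrthogonalProjection (hardy ι) := by
  unfold hardy; infer_instance

/-- The orthogonal projection `P` of `L²` onto `H²`. -/
def hardyProj (ι : Type) [Fintype ι] : L2 ι →L[ℂ] H2 ι :=
  orthogonalProjection (hardy ι)

/-- A matrix-valued `L^∞` function on the circle (the matrices being identified with the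
operators on `ℂ^ι` that they induce): a bounded measurable family of operators. -/
structure Symbol (ι : Type) [Fintype ι] : Type where
  toFun : 𝕋 → (V ι →L[ℂ] V ι)
  meas : AEStronglyMeasurable toFun μ𝕋
  bound : ℝ
  le_bound : ∀ x, ‖toFun x‖ ≤ bound

instance : CoeFun (Symbol ι) (fun _ => 𝕋 → (V ι →L[ℂ] V ι)) := ⟨Symbol.toFun⟩

/-- The multiplication operator `f ↦ Φ f` on `L²(𝕋, ℂ^ι)`. -/
def Symbol.mulLp (Φ : Symbol ι) : L2 ι →L[ℂ] L2 ι :=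
  pointwiseCLM Φ.toFun Φ.meas Φ.le_bound

/-- Pointwise product (composition) of two matrix symbols. -/
def Symbol.mul (Φ Ψ : Symbol ι) : Symbol ι where
  toFun := fun x => (Φ x).comp (Ψ x)
  meas := isBoundedBilinearMap_comp.continuous.comp_aestronglyMeasurable
    (Φ.meas.prodMk Ψ.meas)
  bound := max Φ.bound 0 * max Ψ.bound 0
  le_bound := fun x => (ContinuousLinearMap.opNorm_comp_le _ _).trans <|
    mul_le_mul ((Φ.le_bound x).trans (le_max_left _ _))
      ((Ψ.le_bound x).trans (le_max_left _ _)) (norm_nonneg _) (le_max_right _ _)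

/-- The pointwise adjoint symbol `Φ*` (conjugate transpose). -/
def Symbol.star (Φ : Symbol ι) : Symbol ι where
  toFun := fun x => ContinuousLinearMap.adjoint (Φ x)
  meas := (ContinuousLinearMap.adjoint (𝕜 := ℂ) (E := V ι)
      (F := V ι)).continuous.comp_aestronglyMeasurable Φ.meas
  bound := Φ.bound
  le_bound := fun x =>
    le_trans
      (le_of_eq ((ContinuousLinearMap.adjoint (𝕜 := ℂ) (E := V ι) (F := V ι)).norm_map (Φ.toFun x)))
      (Φ.le_bound x)

end BlockToeplitz

namespace BlockToeplitz
open scoped ComplexConjugate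

theorem norm_fourier_apply (k : ℤ) (x : 𝕋) : ‖fourier k x‖ = 1 := by
  rw [fourier_apply]; exact Circle.norm_coe _

section CompNeg

variable {E : Type*} [NormedAddCommGroup E] [NormedSpace ℂ E]

/-- The composition operator `f(z) ↦ f(z̄)` (i.e. `x ↦ -x` on the additive circle)
on `L²`. -/
def compNeg (E : Type*) [NormedAddCommGroup E] [NormedSpace ℂ E] :
    Lp E 2 μ𝕋 →L[ℂ] Lp E 2 μ𝕋 :=
  LinearMap.mkContinuous
    { toFun := fun f =>
        Lp.compMeasurePreserving (E := E) (p := 2) Neg.neg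
          (Measure.measurePreserving_neg μ𝕋) f
      map_add' := fun f g => by
        exact map_add (Lp.compMeasurePreserving Neg.neg (Measure.measurePreserving_neg μ𝕋)) f g
      map_smul' := fun c f => by
        apply Lp.ext
        have h1 := Lp.coeFn_compMeasurePreserving (μ := μ𝕋) (c • f)
          (Measure.measurePreserving_neg μ𝕋)
        have h2 := Lp.coeFn_compMeasurePreserving (μ := μ𝕋) f
          (Measure.measurePreserving_neg μ𝕋)
        have h3 : ((c • f : Lp E 2 μ𝕋) : 𝕋 → E) ∘ Neg.neg
            =ᵐ[μ𝕋] ((c • (f : 𝕋 → E)) ∘ Neg.neg) :=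
          (Measure.measurePreserving_neg μ𝕋).quasiMeasurePreserving.ae_eq_comp
            (Lp.coeFn_smul c f)
        filter_upwards [h1, h3,
          Lp.coeFn_smul c (Lp.compMeasurePreserving (E := E) (p := 2) Neg.neg
            (Measure.measurePreserving_neg μ𝕋) f), h2]
          with x hx1 hx3 hx4 hx2
        rw [RingHom.id_apply, hx1, hx3, hx4]
        show c • (f : 𝕋 → E) (-x)
            = c • (Lp.compMeasurePreserving (E := E) (p := 2) Neg.neg
                (Measure.measurePreserving_neg μ𝕋) f : 𝕋 → E) x
        rw [hx2]
        rfl }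
    1
    (fun f => by
      simpa using (Lp.norm_compMeasurePreserving (E := E) (p := 2) f
        (Measure.measurePreserving_neg μ𝕋)).le)

/-- The unitary operator `J f (z) = z̄ f(z̄)` on `L²`. -/
def Jop (E : Type*) [NormedAddCommGroup E] [NormedSpace ℂ E] :
    Lp E 2 μ𝕋 →L[ℂ] Lp E 2 μ𝕋 :=
  (pointwiseCLM (fun x => (fourier (-1) x : ℂ) • (1 : E →L[ℂ] E))
      (((map_continuous (fourier (-1))).smul continuous_const).aestronglyMeasurable)
      (C := 1)
      (fun x => by
        show ‖(fourier (-1)) x • (1 : E →L[ℂ] E)‖ ≤ 1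
        rw [norm_smul ((fourier (-1)) x) (1 : E →L[ℂ] E), norm_fourier_apply, one_mul,
          ContinuousLinearMap.one_def]
        exact ContinuousLinearMap.norm_id_le)).comp (compNeg E)

end CompNeg

end BlockToeplitz

namespace BlockToeplitz
open scoped ComplexConjugate

variable {ι : Type} [Fintype ι]

/-- The pointwise transposed-conjugated-reflected symbol `Φ̃(z) := Φ(z̄)*`. -/
def Symbol.tilde (Φ : Symbol ι) : Symbol ι where
  toFun := fun x => ContinuousLinearMap.adjoint (Φ.toFun (-x))
  meas := (ContinuousLinearMap.adjoint (𝕜 := ℂ) (E := V ι)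
      (F := V ι)).continuous.comp_aestronglyMeasurable
    (Φ.meas.comp_quasiMeasurePreserving
      (Measure.measurePreserving_neg μ𝕋).quasiMeasurePreserving)
  bound := Φ.bound
  le_bound := fun x =>
    le_trans
      (le_of_eq
        ((ContinuousLinearMap.adjoint (𝕜 := ℂ) (E := V ι) (F := V ι)).norm_map (Φ.toFun (-x))))
      (Φ.le_bound (-x))

/-- A matrix symbol belongs to `H^∞` iff multiplication by it leaves the Hardy space
invariant. -/
def Symbol.MemHinf (Φ : Symbol ι) : Prop :=
  ∀ f : L2 ι, f ∈ hardy ι → Φ.mulLp f ∈ hardy ι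

/-- A matrix `H^∞` symbol is inner if `Θ(z)*Θ(z) = I` a.e. -/
def Symbol.IsInner (Φ : Symbol ι) : Prop :=
  Φ.MemHinf ∧ ∀ᵐ x ∂μ𝕋, (ContinuousLinearMap.adjoint (Φ.toFun x)).comp (Φ.toFun x) = 1

/-- The block Toeplitz operator `T_Φ = P (Φ ·)` on the vector Hardy space. -/
def toeplitz (Φ : Symbol ι) : H2 ι →L[ℂ] H2 ι :=
  (hardyProj ι).comp (Φ.mulLp.comp (hardy ι).subtypeL)

/-- The block Hankel operator `H_Φ = J P^⊥ (Φ ·)`, viewed as an operator from `H²` to `H²`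
(its image indeed lies in `H²`). -/
def hankel (Φ : Symbol ι) : H2 ι →L[ℂ] H2 ι :=
  (hardyProj ι).comp <|
    (Jop (V ι)).comp <|
      (ContinuousLinearMap.id ℂ (L2 ι) - (hardy ι).subtypeL.comp (hardyProj ι)).comp <|
        Φ.mulLp.comp (hardy ι).subtypeL

/-- The image `Θ · H²` of the Hardy space under multiplication by a symbol. -/
def Symbol.rangeH2 (Φ : Symbol ι) : Submodule ℂ (L2 ι) :=
  (hardy ι).map (Φ.mulLp : L2 ι →ₗ[ℂ] L2 ι)

/-- The model space `H(Θ) := H² ⊖ Θ H²`. -/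
def modelSpace (Θ : Symbol ι) : Submodule ℂ (L2 ι) :=
  hardy ι ⊓ (Θ.rangeH2)ᗮ

/-- A scalar-valued `L^∞` function on the circle. -/
structure SymbolS : Type where
  toFun : 𝕋 → ℂ
  meas : AEStronglyMeasurable toFun μ𝕋
  bound : ℝ
  le_bound : ∀ x, ‖toFun x‖ ≤ bound

instance : CoeFun SymbolS (fun _ => 𝕋 → ℂ) := ⟨SymbolS.toFun⟩

/-- Scalar symbols embed into matrix symbols as `φ I_n`. -/
def SymbolS.toMatrix (φ : SymbolS) (ι : Type) [Fintype ι] : Symbol ι where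
  toFun := fun x => φ.toFun x • (1 : V ι →L[ℂ] V ι)
  meas := φ.meas.smul aestronglyMeasurable_const
  bound := φ.bound
  le_bound := fun x => by
    have h0 : (0 : ℝ) ≤ φ.bound := le_trans (norm_nonneg _) (φ.le_bound 0)
    calc ‖φ.toFun x • (1 : V ι →L[ℂ] V ι)‖ ≤ ‖φ.toFun x‖ * ‖(1 : V ι →L[ℂ] V ι)‖ :=
          ContinuousLinearMap.opNorm_smul_le _ _
      _ ≤ φ.bound * 1 := by
          refine mul_le_mul (φ.le_bound x) ?_ (norm_nonneg _) h0
          rw [ContinuousLinearMap.one_def]; exact ContinuousLinearMap.norm_id_le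
      _ = φ.bound := mul_one _

/-- The scalar-valued `L²` space of the circle. -/
abbrev L2S : Type := Lp ℂ 2 μ𝕋

/-- The span of the negative trigonometric monomials. -/
def negSpanS : Submodule ℂ L2S :=
  Submodule.span ℂ {f | ∃ k : ℤ, k < 0 ∧ f = fourierLp 2 k}

/-- The scalar Hardy space `H²(𝕋)`. -/
def hardyS : Submodule ℂ L2S := negSpanSᗮ

/-- The scalar Hardy space as a Hilbert space. -/
abbrev H2S : Type := ↥hardyS

instance : CompleteSpace H2S := by unfold H2S hardyS; infer_instance

instance : HasOrthogonalProjection hardyS := by unfold hardyS; infer_instance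

/-- The Szegő (Riesz) projection `P : L² → H²`. -/
def hardyProjS : L2S →L[ℂ] H2S := orthogonalProjection hardyS

/-- Multiplication by a scalar `L^∞` function, as an operator on `L²(𝕋)`. -/
def SymbolS.mulLp (φ : SymbolS) : L2S →L[ℂ] L2S :=
  pointwiseCLM (fun x => φ.toFun x • (1 : ℂ →L[ℂ] ℂ))
    (φ.meas.smul aestronglyMeasurable_const)
    (C := φ.bound)
    (fun x => by
      calc ‖φ.toFun x • (1 : ℂ →L[ℂ] ℂ)‖ ≤ ‖φ.toFun x‖ * ‖(1 : ℂ →L[ℂ] ℂ)‖ :=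
            ContinuousLinearMap.opNorm_smul_le _ _
        _ = ‖φ.toFun x‖ := by rw [norm_one, mul_one]
        _ ≤ φ.bound := φ.le_bound x)

/-- The scalar Toeplitz operator `T_φ` on `H²`. -/
def toeplitzS (φ : SymbolS) : H2S →L[ℂ] H2S :=
  hardyProjS.comp (φ.mulLp.comp hardyS.subtypeL)

/-- The scalar Hankel operator `H_φ = J P^⊥ (φ ·)` on `H²`. -/
def hankelS (φ : SymbolS) : H2S →L[ℂ] H2S :=
  hardyProjS.comp <|
    (Jop ℂ).comp <|
      (ContinuousLinearMap.id ℂ L2S - hardyS.subtypeL.comp hardyProjS).comp <|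
        φ.mulLp.comp hardyS.subtypeL

/-- Pointwise product of scalar symbols. -/
def SymbolS.mul (φ ψ : SymbolS) : SymbolS where
  toFun := fun x => φ.toFun x * ψ.toFun x
  meas := φ.meas.mul ψ.meas
  bound := max φ.bound 0 * max ψ.bound 0
  le_bound := fun x => by
    rw [norm_mul]
    exact mul_le_mul ((φ.le_bound x).trans (le_max_left _ _))
      ((ψ.le_bound x).trans (le_max_left _ _)) (norm_nonneg _) (le_max_right _ _)

/-- The complex-conjugate symbol `φ̄`. -/
def SymbolS.conj (φ : SymbolS) : SymbolS where
  toFun := fun x => conj (φ.toFun x)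
  meas := Complex.continuous_conj.comp_aestronglyMeasurable φ.meas
  bound := φ.bound
  le_bound := fun x => le_trans (le_of_eq (RCLike.norm_conj _)) (φ.le_bound x)

/-- The reflected conjugate symbol `φ̃(z) := conj (φ(z̄))`. -/
def SymbolS.tilde (φ : SymbolS) : SymbolS where
  toFun := fun x => conj (φ.toFun (-x))
  meas := Complex.continuous_conj.comp_aestronglyMeasurable
    (φ.meas.comp_quasiMeasurePreserving
      (Measure.measurePreserving_neg μ𝕋).quasiMeasurePreserving)
  bound := φ.bound
  le_bound := fun x => le_trans (le_of_eq (RCLike.norm_conj _)) (φ.le_bound (-x))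

/-- A scalar symbol is in `H^∞` iff multiplication by it preserves `H²`. -/
def SymbolS.MemHinf (φ : SymbolS) : Prop :=
  ∀ f : L2S, f ∈ hardyS → φ.mulLp f ∈ hardyS

/-- A scalar inner function: an `H^∞` function which is unimodular a.e. on the circle. -/
def SymbolS.IsInner (φ : SymbolS) : Prop :=
  φ.MemHinf ∧ ∀ᵐ x ∂μ𝕋, ‖φ.toFun x‖ = 1

/-- The image `θ · H²` of the Hardy space under a scalar multiplication operator. -/
def SymbolS.rangeH2 (φ : SymbolS) : Submodule ℂ L2S :=
  hardyS.map (φ.mulLp : L2S →ₗ[ℂ] L2S)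

/-- The scalar model space `H(θ) = H² ⊖ θH²`. -/
def modelSpaceS (θ : SymbolS) : Submodule ℂ L2S :=
  hardyS ⊓ (θ.rangeH2)ᗮ

/-- The coordinate function `z` on the circle (i.e. `x ↦ e^{ix}`). -/
def circleCoord : 𝕋 → ℂ := fun x => fourier 1 x

/-- The symbol `z` of the unilateral shift. -/
def shiftSymbolS : SymbolS where
  toFun := circleCoord
  meas := (map_continuous (fourier 1)).aestronglyMeasurable
  bound := 1
  le_bound := fun x => le_of_eq (norm_fourier_apply 1 x)

/-- The symbol `z̄`. -/
def coshiftSymbolS : SymbolS where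
  toFun := fun x => fourier (-1) x
  meas := (map_continuous (fourier (-1))).aestronglyMeasurable
  bound := 1
  le_bound := fun x => le_of_eq (norm_fourier_apply (-1) x)

/-- An operator on a complex Hilbert space is hyponormal if its self-commutator
`[T*, T] = T*T - TT*` is a positive operator. -/
def Hyponormal {H : Type*} [NormedAddCommGroup H] [InnerProductSpace ℂ H] [CompleteSpace H]
    (T : H →L[ℂ] H) : Prop :=
  (ContinuousLinearMap.adjoint T ∘L T - T ∘L ContinuousLinearMap.adjoint T).IsPositive

/-- A Blaschke factor `b_a(z) = (z - a)/(1 - āz)`. -/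
def blaschke (a z : ℂ) : ℂ := (z - a) / (1 - conj a * z)

end BlockToeplitz

namespace BlockToeplitz

/-- The Hilbert space `H² ⊕ H²` (with the ℓ²-product structure). -/
abbrev H2S2 : Type := WithLp 2 (H2S × H2S)

/-- The `2 × 2` block operator `[[T₁₁, T₁₂], [T₂₁, T₂₂]]` on `H² ⊕ H²`. -/
def block2 (T11 T12 T21 T22 : H2S →L[ℂ] H2S) : H2S2 →L[ℂ] H2S2 :=
  ((WithLp.prodContinuousLinearEquiv 2 ℂ H2S H2S).symm.toContinuousLinearMap).comp
    (((T11.coprod T12).prod (T21.coprod T22)).comp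
      ((WithLp.prodContinuousLinearEquiv 2 ℂ H2S H2S).toContinuousLinearMap))

/-! ### Auxiliary infrastructure for the proof of Statement 19 -/

open Filter ContinuousLinearMap
open scoped ComplexConjugate

local notation "⟪" x ", " y "⟫" => @inner ℂ _ _ x y

/-- Almost-everywhere description of the multiplication operator. -/
theorem mulLp_coeFn (φ : SymbolS) (f : L2S) :
    ⇑(φ.mulLp f) =ᵐ[μ𝕋] fun x => φ x * f x := by
  unfold SymbolS.mulLp
  rw [pointwiseCLM_apply]
  refine (MemLp.coeFn_toLp _).trans (Filter.Eventually.of_forall fun x => ?_)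
  simp

theorem mulLp_congr {φ ψ : SymbolS} (h : φ.toFun = ψ.toFun) : φ.mulLp = ψ.mulLp := by
  refine ContinuousLinearMap.ext fun f => ?_
  apply Lp.ext
  filter_upwards [mulLp_coeFn φ f, mulLp_coeFn ψ f] with x h1 h2
  rw [h1, h2]
  show φ.toFun x * f x = ψ.toFun x * f x
  rw [h]

theorem toeplitzS_congr {φ ψ : SymbolS} (h : φ.toFun = ψ.toFun) : toeplitzS φ = toeplitzS ψ := by
  unfold toeplitzS
  rw [mulLp_congr h]

theorem inner_L2 (f g : L2S) : ⟪f, g⟫ = ∫ x, conj (f x) * g x ∂μ𝕋 := by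
  rw [MeasureTheory.L2.inner_def]
  simp [RCLike.inner_apply]
  congr 1; funext x; ring

/-- The symbol `z^n`. -/
def symM (n : ℤ) : SymbolS where
  toFun := fun x => fourier n x
  meas := (map_continuous (fourier n)).aestronglyMeasurable
  bound := 1
  le_bound := fun x => le_of_eq (norm_fourier_apply n x)

/-- Multiplication by `z^n` on `L²`. -/
def Mop (n : ℤ) : L2S →L[ℂ] L2S := (symM n).mulLp

abbrev eL (m : ℤ) : L2S := fourierLp 2 m

theorem Mop_coeFn (n : ℤ) (f : L2S) :
    ⇑(Mop n f) =ᵐ[μ𝕋] fun x => fourier n x * f x := mulLp_coeFn (symM n) f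

theorem Mop_eL (q m : ℤ) : Mop q (eL m) = eL (q + m) := by
  apply Lp.ext
  filter_upwards [Mop_coeFn q (eL m), coeFn_fourierLp 2 m, coeFn_fourierLp 2 (q + m)]
    with x h1 h2 h3
  rw [h1, h2, h3, ← fourier_add]

theorem Mop_norm (q : ℤ) (f : L2S) : ‖Mop q f‖ = ‖f‖ := by
  rw [Lp.norm_def, Lp.norm_def]
  congr 1
  apply eLpNorm_congr_norm_ae
  filter_upwards [Mop_coeFn q f] with x h1
  rw [h1, norm_mul, norm_fourier_apply, one_mul]

/-- `L^∞` symbols are in `L²`. -/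
theorem SymbolS.memL2 (φ : SymbolS) : MemLp φ.toFun 2 μ𝕋 :=
  MemLp.of_bound φ.meas φ.bound (Filter.Eventually.of_forall φ.le_bound)

/-- The class of an `L^∞` symbol in `L²`. -/
def SymbolS.toL2 (φ : SymbolS) : L2S := (φ.memL2).toLp φ.toFun

theorem SymbolS.coeFn_toL2 (φ : SymbolS) : ⇑φ.toL2 =ᵐ[μ𝕋] φ.toFun :=
  MemLp.coeFn_toLp _

theorem mulLp_eL (φ : SymbolS) (m : ℤ) : φ.mulLp (eL m) = Mop m φ.toL2 := by
  apply Lp.ext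
  filter_upwards [mulLp_coeFn φ (eL m), Mop_coeFn m φ.toL2, coeFn_fourierLp 2 m,
    φ.coeFn_toL2] with x h1 h2 h3 h4
  rw [h1, h2, h3, h4, mul_comm]

theorem norm_toL2_conj (φ : SymbolS) : ‖φ.conj.toL2‖ = ‖φ.toL2‖ := by
  rw [Lp.norm_def, Lp.norm_def]
  congr 1
  apply eLpNorm_congr_norm_ae
  filter_upwards [φ.conj.coeFn_toL2, φ.coeFn_toL2] with x h1 h2
  rw [h1, h2]
  simp [SymbolS.conj]
/-- The Fourier Hilbert basis of `L²(𝕋)`. -/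
abbrev FB : HilbertBasis ℤ ℂ L2S := @fourierBasis (2 * π) fact2pi

theorem coe_FB (m : ℤ) : (FB m : L2S) = eL m := congrFun coe_fourierBasis m

theorem mem_orthogonal_span {S : Set L2S} {v : L2S} (h : ∀ u ∈ S, ⟪u, v⟫ = 0) :
    v ∈ (Submodule.span ℂ S)ᗮ := by
  rw [Submodule.mem_orthogonal]
  intro u hu
  induction hu using Submodule.span_induction with
  | mem y hy => exact h y hy
  | zero => simp
  | add y z _ _ hy hz => rw [inner_add_left, hy, hz, add_zero]
  | smul c y _ hy => rw [inner_smul_left, hy, mul_zero]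

theorem orthonormal_eL : Orthonormal ℂ eL := by
  have h := FB.orthonormal
  rwa [coe_fourierBasis] at h

theorem norm_eL (m : ℤ) : ‖eL m‖ = 1 := orthonormal_eL.1 m

theorem eL_mem_hardy {m : ℤ} (hm : 0 ≤ m) : eL m ∈ hardyS := by
  refine mem_orthogonal_span fun u hu => ?_
  obtain ⟨k, hk, rfl⟩ := hu
  exact orthonormal_eL.2 (show k ≠ m by omega)

theorem eL_mem_orth {m : ℤ} (hm : m < 0) : eL m ∈ hardySᗮ :=
  Submodule.le_orthogonal_orthogonal negSpanS (Submodule.subset_span ⟨m, hm, rfl⟩)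

/-- The Szegő projection, as an operator on `L²`. -/
def Pr : L2S →L[ℂ] L2S := hardyS.subtypeL.comp hardyProjS

theorem Pr_mem (u : L2S) : Pr u ∈ hardyS := SetLike.coe_mem (hardyProjS u)

theorem Pr_of_mem {u : L2S} (hu : u ∈ hardyS) : Pr u = u := by
  show (↑(orthogonalProjection hardyS u) : L2S) = u
  exact (Submodule.starProjection_eq_self_iff).mpr hu

theorem Pr_of_mem_orth {u : L2S} (hu : u ∈ hardySᗮ) : Pr u = 0 := by
  show (↑(orthogonalProjection hardyS u) : L2S) = 0
  rw [Submodule.orthogonalProjectionOnto_apply_of_mem_orthogonal hu]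
  rfl

theorem sub_Pr_mem_orth (u : L2S) : u - Pr u ∈ hardySᗮ :=
  Submodule.sub_starProjection_mem_orthogonal u

theorem inner_Pr_right {w : L2S} (hw : w ∈ hardyS) (u : L2S) : ⟪w, Pr u⟫ = ⟪w, u⟫ := by
  have h0 : ⟪w, u - Pr u⟫ = 0 :=
    (Submodule.mem_orthogonal _ _).1 (sub_Pr_mem_orth u) w hw
  rw [inner_sub_right] at h0
  have := sub_eq_zero.mp h0
  linear_combination -this

theorem inner_Pr_left {w : L2S} (hw : w ∈ hardyS) (u : L2S) : ⟪Pr u, w⟫ = ⟪u, w⟫ := by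
  rw [← inner_conj_symm, inner_Pr_right hw, inner_conj_symm]

theorem norm_Pr_sq (u : L2S) : ‖Pr u‖ ^ 2 = ‖u‖ ^ 2 - ‖u - Pr u‖ ^ 2 := by
  have hinner : ⟪Pr u, u - Pr u⟫ = 0 :=
    (Submodule.mem_orthogonal _ _).1 (sub_Pr_mem_orth u) (Pr u) (Pr_mem u)
  have h : ‖Pr u + (u - Pr u)‖ * ‖Pr u + (u - Pr u)‖
      = ‖Pr u‖ * ‖Pr u‖ + ‖u - Pr u‖ * ‖u - Pr u‖ :=
    norm_add_sq_eq_norm_sq_add_norm_sq_of_inner_eq_zero _ _ hinner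
  rw [add_sub_cancel] at h
  nlinarith [h]

theorem norm_sub_Pr_le (u : L2S) {t : L2S} (ht : t ∈ hardyS) : ‖u - Pr u‖ ≤ ‖u - t‖ := by
  have hinner : ⟪u - Pr u, Pr u - t⟫ = 0 := by
    have h1 : Pr u - t ∈ hardyS := Submodule.sub_mem _ (Pr_mem u) ht
    exact (Submodule.mem_orthogonal' _ _).1 (sub_Pr_mem_orth u) _ h1
  have key : ‖u - t‖ * ‖u - t‖ = ‖u - Pr u‖ * ‖u - Pr u‖ + ‖Pr u - t‖ * ‖Pr u - t‖ := by
    have h2 : u - t = (u - Pr u) + (Pr u - t) := by rw [sub_add_sub_cancel]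
    rw [h2]
    exact norm_add_sq_eq_norm_sq_add_norm_sq_of_inner_eq_zero _ _ hinner
  nlinarith [norm_nonneg (u - t), norm_nonneg (u - Pr u), mul_self_nonneg ‖Pr u - t‖]

/-- The defect `‖(1-P)(z^n w)‖` is eventually small. -/
theorem defect_small (w : L2S) {ε : ℝ} (hε : 0 < ε) :
    ∃ N : ℤ, ∀ n : ℤ, N ≤ n → ‖Mop n w - Pr (Mop n w)‖ ≤ ε := by
  have hsum : HasSum (fun i : ℤ => FB.repr w i • eL i) w := by
    have h := FB.hasSum_repr w
    have he : ∀ i : ℤ, (FB i : L2S) = eL i := fun i =>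
      congrFun coe_fourierBasis i
    simp only [← he]
    exact h
  have : ∀ᶠ F : Finset ℤ in atTop,
      dist (∑ i ∈ F, FB.repr w i • eL i) w < ε :=
    (Metric.tendsto_nhds.mp hsum) ε hε
  obtain ⟨F, hF⟩ := this.exists
  obtain ⟨M, hM⟩ := (F.image (fun i => -i)).exists_le
  refine ⟨M, fun n hn => ?_⟩
  set t : L2S := ∑ i ∈ F, FB.repr w i • eL (n + i) with ht
  have htmem : t ∈ hardyS := by
    refine Submodule.sum_mem _ fun i hi => Submodule.smul_mem _ _ (eL_mem_hardy ?_)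
    have := hM (-i) (Finset.mem_image_of_mem _ hi)
    omega
  have heq : Mop n (∑ i ∈ F, FB.repr w i • eL i) = t := by
    rw [map_sum]
    refine Finset.sum_congr rfl fun i _ => ?_
    rw [ContinuousLinearMap.map_smul, Mop_eL]
  calc ‖Mop n w - Pr (Mop n w)‖ ≤ ‖Mop n w - t‖ := norm_sub_Pr_le _ htmem
    _ = ‖w - ∑ i ∈ F, FB.repr w i • eL i‖ := by
        rw [← heq, ← map_sub, Mop_norm]
    _ ≤ ε := by
        rw [← dist_eq_norm, dist_comm]
        exact le_of_lt hF
theorem inner_mulLp (σ : SymbolS) (u v : L2S) :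
    ⟪σ.conj.mulLp u, v⟫ = ⟪u, σ.mulLp v⟫ := by
  rw [inner_L2, inner_L2]
  apply integral_congr_ae
  filter_upwards [mulLp_coeFn σ.conj u, mulLp_coeFn σ v] with x h1 h2
  rw [h1, h2]
  show conj (conj (σ.toFun x) * u x) * v x = conj (u x) * (σ.toFun x * v x)
  rw [map_mul, conj_conj]
  ring

theorem toeplitzS_adjoint (σ : SymbolS) :
    ContinuousLinearMap.adjoint (toeplitzS σ) = toeplitzS σ.conj := by
  symm
  rw [ContinuousLinearMap.eq_adjoint_iff]
  intro f g
  show ⟪(↑(toeplitzS σ.conj f) : L2S), (↑g : L2S)⟫ = ⟪(↑f : L2S), (↑(toeplitzS σ g) : L2S)⟫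
  have h1 : (↑(toeplitzS σ.conj f) : L2S) = Pr (σ.conj.mulLp ↑f) := rfl
  have h2 : (↑(toeplitzS σ g) : L2S) = Pr (σ.mulLp ↑g) := rfl
  rw [h1, h2, inner_Pr_left g.2, inner_Pr_right f.2]
  exact inner_mulLp σ ↑f ↑g

/-- Pairing of two Hardy-space elements into `H² ⊕ H²`. -/
def mk2 (f g : H2S) : H2S2 := (WithLp.equiv 2 (H2S × H2S)).symm (f, g)

theorem block2_eval (A B C D : H2S →L[ℂ] H2S) (x : H2S2) :
    block2 A B C D x = mk2 (A x.fst + B x.snd) (C x.fst + D x.snd) := rfl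

theorem norm_mk2_sq (f g : H2S) : ‖mk2 f g‖ ^ 2 = ‖f‖ ^ 2 + ‖g‖ ^ 2 := by
  rw [WithLp.prod_norm_sq_eq_of_L2]
  rfl

theorem block2_adjoint (A B C D : H2S →L[ℂ] H2S) :
    ContinuousLinearMap.adjoint (block2 A B C D)
      = block2 (ContinuousLinearMap.adjoint A) (ContinuousLinearMap.adjoint C)
          (ContinuousLinearMap.adjoint B) (ContinuousLinearMap.adjoint D) := by
  symm
  rw [ContinuousLinearMap.eq_adjoint_iff]
  intro x y
  rw [block2_eval, block2_eval]
  show ⟪ContinuousLinearMap.adjoint A x.fst + ContinuousLinearMap.adjoint C x.snd, y.fst⟫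
      + ⟪ContinuousLinearMap.adjoint B x.fst + ContinuousLinearMap.adjoint D x.snd, y.snd⟫
      = ⟪x.fst, A y.fst + B y.snd⟫ + ⟪x.snd, C y.fst + D y.snd⟫
  rw [inner_add_left, inner_add_left, inner_add_right, inner_add_right,
    ContinuousLinearMap.adjoint_inner_left, ContinuousLinearMap.adjoint_inner_left,
    ContinuousLinearMap.adjoint_inner_left, ContinuousLinearMap.adjoint_inner_left]
  ring

theorem hypo_norm_le {T : H2S2 →L[ℂ] H2S2} (h : Hyponormal T) (x : H2S2) :
    ‖ContinuousLinearMap.adjoint T x‖ ^ 2 ≤ ‖T x‖ ^ 2 := by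
  have h2 := h.2 x
  rw [ContinuousLinearMap.reApplyInnerSelf_apply, ContinuousLinearMap.sub_apply,
    ContinuousLinearMap.comp_apply, ContinuousLinearMap.comp_apply, inner_sub_left,
    map_sub] at h2
  have e1 : ⟪ContinuousLinearMap.adjoint T (T x), x⟫ = ⟪T x, T x⟫ :=
    ContinuousLinearMap.adjoint_inner_left T x (T x)
  have e2 : ⟪T (ContinuousLinearMap.adjoint T x), x⟫
      = ⟪ContinuousLinearMap.adjoint T x, ContinuousLinearMap.adjoint T x⟫ :=
    (ContinuousLinearMap.adjoint_inner_right T (ContinuousLinearMap.adjoint T x) x).symm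
  rw [e1, e2] at h2
  change 0 ≤ RCLike.re ⟪T x, T x⟫ - RCLike.re ⟪ContinuousLinearMap.adjoint T x,
    ContinuousLinearMap.adjoint T x⟫ at h2
  have h3 : RCLike.re ⟪T x, T x⟫ = ‖T x‖ ^ 2 := by
    have := inner_self_eq_norm_sq (𝕜 := ℂ) (T x)
    exact this
  have h4 : RCLike.re ⟪ContinuousLinearMap.adjoint T x, ContinuousLinearMap.adjoint T x⟫
      = ‖ContinuousLinearMap.adjoint T x‖ ^ 2 := by
    have := inner_self_eq_norm_sq (𝕜 := ℂ) (ContinuousLinearMap.adjoint T x)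
    exact this
  linarith

theorem inner_eL_Mop (m q : ℤ) (w : L2S) : ⟪eL m, Mop q w⟫ = ⟪eL (m - q), w⟫ := by
  rw [inner_L2, inner_L2]
  apply integral_congr_ae
  filter_upwards [Mop_coeFn q w, coeFn_fourierLp 2 m, coeFn_fourierLp 2 (m - q)]
    with x h1 h2 h3
  rw [h1, h2, h3]
  have hkey : conj (fourier m x) * fourier q x = conj (fourier (m - q) x) := by
    rw [← fourier_neg, ← fourier_neg, ← fourier_add]
    congr 1
    ring
  rw [← mul_assoc, hkey]

theorem inner_eL_conj (σ : SymbolS) (m : ℤ) :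
    ⟪eL m, σ.conj.toL2⟫ = conj ⟪eL (-m), σ.toL2⟫ := by
  rw [inner_L2, inner_L2, ← integral_conj]
  apply integral_congr_ae
  filter_upwards [σ.conj.coeFn_toL2, σ.coeFn_toL2, coeFn_fourierLp 2 m,
    coeFn_fourierLp 2 (-m)] with x h1 h2 h3 h4
  rw [h1, h2, h3, h4]
  show conj (fourier m x) * conj (σ.toFun x) = conj (conj (fourier (-m) x) * σ.toFun x)
  rw [map_mul, conj_conj, ← fourier_neg]

theorem inner_eL_eq_repr (w : L2S) (m : ℤ) : ⟪eL m, w⟫ = FB.repr w m := by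
  rw [FB.repr_apply_apply]
  congr 1
  exact (coe_FB m).symm

theorem summable_repr_sq (w : L2S) :
    Summable (fun m : ℤ => ‖FB.repr w m‖ ^ 2) := by
  have h := lp.memℓp (FB.repr w)
  rw [memℓp_gen_iff (by norm_num)] at h
  have h2 : ∀ m : ℤ, ‖FB.repr w m‖ ^ (ENNReal.toReal 2)
      = ‖FB.repr w m‖ ^ (2 : ℕ) := by
    intro m
    rw [show (ENNReal.toReal 2) = ((2 : ℕ) : ℝ) by norm_num, Real.rpow_natCast]
  simpa [h2] using h

theorem tendsto_inner_eL (w : L2S) {g : ℕ → ℤ} (hg : Function.Injective g) :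
    Filter.Tendsto (fun k => ⟪eL (g k), w⟫) Filter.atTop (nhds 0) := by
  have hsq := (summable_repr_sq w).tendsto_cofinite_zero
  have hgt : Filter.Tendsto g Filter.atTop Filter.cofinite := by
    rw [← Nat.cofinite_eq_atTop]
    exact hg.tendsto_cofinite
  have h1 : Filter.Tendsto (fun k => ‖FB.repr w (g k)‖ ^ 2)
      Filter.atTop (nhds 0) := hsq.comp hgt
  have h2 : Filter.Tendsto (fun k => ‖FB.repr w (g k)‖) Filter.atTop (nhds 0) := by
    have h3 := (Real.continuous_sqrt.tendsto 0).comp h1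
    have h4 : (Real.sqrt ∘ fun k => ‖FB.repr w (g k)‖ ^ 2)
        = fun k => ‖FB.repr w (g k)‖ := by
      funext k
      exact Real.sqrt_sq (norm_nonneg _)
    rwa [h4, Real.sqrt_zero] at h3
  have h5 : Filter.Tendsto (fun k => FB.repr w (g k)) Filter.atTop (nhds 0) :=
    tendsto_zero_iff_norm_tendsto_zero.mpr h2
  have hsim : (fun k => ⟪eL (g k), w⟫) = fun k => FB.repr w (g k) := by
    funext k
    exact inner_eL_eq_repr w (g k)
  rw [hsim]
  exact h5

theorem eq_zero_of_inner_eL (w : L2S) (h : ∀ m : ℤ, ⟪eL m, w⟫ = 0) : w = 0 := by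
  have hr : FB.repr w = 0 := by
    ext m
    have := h m
    rw [inner_eL_eq_repr] at this
    simpa using this
  have h2 := congrArg FB.repr.symm hr
  simpa using h2
theorem coe_toeplitzS_apply (σ : SymbolS) (f : H2S) :
    (↑(toeplitzS σ f) : L2S) = Pr (σ.mulLp ↑f) := rfl

theorem shift_toFun : shiftSymbolS.toFun = (symM 1).toFun := rfl

theorem coshift_toFun : coshiftSymbolS.toFun = (symM (-1)).toFun := rfl

theorem shift_conj_toFun : shiftSymbolS.conj.toFun = coshiftSymbolS.toFun :=
  funext fun x => (fourier_neg (n := 1)).symm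

theorem coshift_conj_toFun : coshiftSymbolS.conj.toFun = shiftSymbolS.toFun := by
  funext x
  show conj (fourier (-1) x) = fourier 1 x
  rw [fourier_neg (n := 1), conj_conj]

theorem Mop_zero_apply (w : L2S) : Mop 0 w = w := by
  apply Lp.ext
  filter_upwards [Mop_coeFn 0 w] with x h1
  rw [h1, fourier_zero, one_mul]

/-- The key inequality extracted from hyponormality of the block operator. -/
theorem key_ineq {φ ψ : SymbolS}
    (h : Hyponormal (block2 (toeplitzS shiftSymbolS) (toeplitzS φ) (toeplitzS ψ)
      (toeplitzS coshiftSymbolS)))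
    {u v : L2S} (hu : u ∈ hardyS) (hv : v ∈ hardyS) :
    ‖Pr (Mop (-1) u) + Pr (ψ.conj.mulLp v)‖ ^ 2
        + ‖Pr (φ.conj.mulLp u) + Pr (Mop 1 v)‖ ^ 2
      ≤ ‖Pr (Mop 1 u) + Pr (φ.mulLp v)‖ ^ 2
        + ‖Pr (ψ.mulLp u) + Pr (Mop (-1) v)‖ ^ 2 := by
  classical
  set T := block2 (toeplitzS shiftSymbolS) (toeplitzS φ) (toeplitzS ψ)
    (toeplitzS coshiftSymbolS) with hT
  have hadj : ContinuousLinearMap.adjoint T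
      = block2 (toeplitzS coshiftSymbolS) (toeplitzS ψ.conj) (toeplitzS φ.conj)
          (toeplitzS shiftSymbolS) := by
    rw [hT, block2_adjoint, toeplitzS_adjoint, toeplitzS_adjoint, toeplitzS_adjoint,
      toeplitzS_adjoint, toeplitzS_congr shift_conj_toFun, toeplitzS_congr coshift_conj_toFun]
  set f : H2S := ⟨u, hu⟩ with hf
  set g : H2S := ⟨v, hv⟩ with hg
  have hineq := hypo_norm_le h (mk2 f g)
  rw [hadj] at hineq
  rw [block2_eval, block2_eval] at hineq
  have hfst : (mk2 f g).fst = f := rfl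
  have hsnd : (mk2 f g).snd = g := rfl
  rw [hfst, hsnd, norm_mk2_sq, norm_mk2_sq] at hineq
  have hco : ∀ (σ τ : SymbolS), ‖toeplitzS σ f + toeplitzS τ g‖
      = ‖Pr (σ.mulLp u) + Pr (τ.mulLp v)‖ := by
    intro σ τ
    rw [show ‖toeplitzS σ f + toeplitzS τ g‖ = ‖(↑(toeplitzS σ f + toeplitzS τ g) : L2S)‖ from rfl]
    rw [Submodule.coe_add, coe_toeplitzS_apply, coe_toeplitzS_apply]
  rw [hco, hco, hco, hco] at hineq
  rw [mulLp_congr shift_toFun, mulLp_congr coshift_toFun] at hineq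
  exact hineq
theorem normA {e w : L2S} (he : e ∈ hardyS) {lam : ℂ} (hlam : ‖lam‖ = 1) (hne : ‖e‖ = 1) :
    ‖e + lam • Pr w‖ ^ 2 = 1 + ‖Pr w‖ ^ 2 + 2 * (lam * ⟪e, w⟫).re := by
  rw [norm_add_sq (𝕜 := ℂ), inner_smul_right, inner_Pr_right he, norm_smul, hlam, one_mul, hne]
  rw [RCLike.re_to_complex]
  ring

theorem normB {e w : L2S} (he : e ∈ hardyS) {lam : ℂ} (hlam : ‖lam‖ = 1) (hne : ‖e‖ = 1) :
    ‖Pr w + lam • e‖ ^ 2 = ‖Pr w‖ ^ 2 + 1 + 2 * (lam * conj ⟪e, w⟫).re := by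
  have h1 : ⟪Pr w, e⟫ = conj ⟪e, w⟫ := by
    rw [inner_Pr_left he]
    exact (inner_conj_symm w e).symm
  rw [norm_add_sq (𝕜 := ℂ), inner_smul_right, h1, norm_smul, hlam, one_mul, hne]
  rw [RCLike.re_to_complex]
  ring

/-- The Fourier coefficients of `φ + conj ψ`. -/
def dd (φ ψ : SymbolS) (m : ℤ) : ℂ := ⟪eL m, φ.toL2⟫ + conj ⟪eL (-m), ψ.toL2⟫

theorem cross_ineq {φ ψ : SymbolS}
    (h : Hyponormal (block2 (toeplitzS shiftSymbolS) (toeplitzS φ) (toeplitzS ψ)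
      (toeplitzS coshiftSymbolS)))
    (j k n : ℤ) (hj : 0 ≤ j) (hk : 0 ≤ k) (hn : 1 ≤ n) {lam : ℂ} (hlam : ‖lam‖ = 1) :
    2 * (lam * (dd φ ψ (j - k - 1) - dd φ ψ (j - k + 1))).re
      ≤ ‖Mop (n + k) ψ.conj.toL2 - Pr (Mop (n + k) ψ.conj.toL2)‖ ^ 2
        + ‖Mop (n + j) φ.conj.toL2 - Pr (Mop (n + j) φ.conj.toL2)‖ ^ 2 := by
  have hu : eL (n + j) ∈ hardyS := eL_mem_hardy (by omega)
  have hv : lam • eL (n + k) ∈ hardyS :=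
    Submodule.smul_mem _ _ (eL_mem_hardy (by omega))
  have hkey := key_ineq h hu hv
  have e1 : Pr (Mop (-1) (eL (n + j))) = eL (n + j - 1) := by
    rw [Mop_eL, show (-1 : ℤ) + (n + j) = n + j - 1 by ring]
    exact Pr_of_mem (eL_mem_hardy (by omega))
  have e2 : ψ.conj.mulLp (lam • eL (n + k)) = lam • Mop (n + k) ψ.conj.toL2 := by
    rw [ContinuousLinearMap.map_smul, mulLp_eL]
  have e3 : φ.conj.mulLp (eL (n + j)) = Mop (n + j) φ.conj.toL2 := mulLp_eL _ _
  have e4 : Pr (Mop 1 (lam • eL (n + k))) = lam • eL (n + k + 1) := by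
    rw [ContinuousLinearMap.map_smul, Mop_eL, show (1 : ℤ) + (n + k) = n + k + 1 by ring,
      ContinuousLinearMap.map_smul, Pr_of_mem (eL_mem_hardy (by omega : (0:ℤ) ≤ n + k + 1))]
  have e5 : Pr (Mop 1 (eL (n + j))) = eL (n + j + 1) := by
    rw [Mop_eL, show (1 : ℤ) + (n + j) = n + j + 1 by ring]
    exact Pr_of_mem (eL_mem_hardy (by omega))
  have e6 : φ.mulLp (lam • eL (n + k)) = lam • Mop (n + k) φ.toL2 := by
    rw [ContinuousLinearMap.map_smul, mulLp_eL]
  have e7 : ψ.mulLp (eL (n + j)) = Mop (n + j) ψ.toL2 := mulLp_eL _ _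
  have e8 : Pr (Mop (-1) (lam • eL (n + k))) = lam • eL (n + k - 1) := by
    rw [ContinuousLinearMap.map_smul, Mop_eL, show (-1 : ℤ) + (n + k) = n + k - 1 by ring,
      ContinuousLinearMap.map_smul, Pr_of_mem (eL_mem_hardy (by omega : (0:ℤ) ≤ n + k - 1))]
  rw [e1, e2, e3, e4, e5, e6, e7, e8] at hkey
  rw [ContinuousLinearMap.map_smul, ContinuousLinearMap.map_smul] at hkey
  rw [normA (eL_mem_hardy (by omega : (0:ℤ) ≤ n + j - 1)) hlam (norm_eL _),
      normB (eL_mem_hardy (by omega : (0:ℤ) ≤ n + k + 1)) hlam (norm_eL _),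
      normA (eL_mem_hardy (by omega : (0:ℤ) ≤ n + j + 1)) hlam (norm_eL _),
      normB (eL_mem_hardy (by omega : (0:ℤ) ≤ n + k - 1)) hlam (norm_eL _)] at hkey
  rw [inner_eL_Mop, inner_eL_Mop, inner_eL_Mop, inner_eL_Mop] at hkey
  rw [show n + j - 1 - (n + k) = -(k + 1 - j) by ring,
      show n + k + 1 - (n + j) = k + 1 - j by ring,
      show n + j + 1 - (n + k) = j - k + 1 by ring,
      show n + k - 1 - (n + j) = -(j - k + 1) by ring] at hkey
  rw [inner_eL_conj ψ (-(k + 1 - j)), inner_eL_conj φ (k + 1 - j)] at hkey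
  rw [show (-(-(k + 1 - j)) : ℤ) = k + 1 - j by ring,
      show (-(k + 1 - j) : ℤ) = j - k - 1 by ring] at hkey
  rw [conj_conj] at hkey
  rw [norm_Pr_sq (Mop (n + k) ψ.conj.toL2), norm_Pr_sq (Mop (n + j) φ.conj.toL2),
      norm_Pr_sq (Mop (n + k) φ.toL2), norm_Pr_sq (Mop (n + j) ψ.toL2),
      Mop_norm, Mop_norm, Mop_norm, Mop_norm, norm_toL2_conj, norm_toL2_conj] at hkey
  have hnn1 : (0:ℝ) ≤ ‖Mop (n + k) φ.toL2 - Pr (Mop (n + k) φ.toL2)‖ ^ 2 := sq_nonneg _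
  have hnn2 : (0:ℝ) ≤ ‖Mop (n + j) ψ.toL2 - Pr (Mop (n + j) ψ.toL2)‖ ^ 2 := sq_nonneg _
  simp only [dd, mul_sub, mul_add, Complex.sub_re, Complex.add_re] at hkey ⊢
  rw [show (-(j - k - 1) : ℤ) = k + 1 - j by ring]
  linarith
theorem dd_lim {φ ψ : SymbolS}
    (h : Hyponormal (block2 (toeplitzS shiftSymbolS) (toeplitzS φ) (toeplitzS ψ)
      (toeplitzS coshiftSymbolS)))
    (m : ℤ) {lam : ℂ} (hlam : ‖lam‖ = 1) :
    (lam * (dd φ ψ (m - 1) - dd φ ψ (m + 1))).re ≤ 0 := by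
  by_contra hc
  push_neg at hc
  set ε : ℝ := (lam * (dd φ ψ (m - 1) - dd φ ψ (m + 1))).re with hε
  have hδ : (0:ℝ) < Real.sqrt (ε / 2) := Real.sqrt_pos.mpr (by linarith)
  obtain ⟨N1, hN1⟩ := defect_small ψ.conj.toL2 hδ
  obtain ⟨N2, hN2⟩ := defect_small φ.conj.toL2 hδ
  set j : ℤ := max m 0 with hj
  set k : ℤ := max (-m) 0 with hk
  have hjk : j - k = m := by
    rcases le_or_gt 0 m with hm | hm
    · rw [hj, hk, max_eq_left hm, max_eq_right (by omega)]; ring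
    · rw [hj, hk, max_eq_right (by omega), max_eq_left (by omega)]; ring
  set n : ℤ := max 1 (max (N1 - k) (N2 - j)) with hn
  have hcross := cross_ineq h j k n (le_max_right _ _) (le_max_right _ _)
    (le_max_left _ _) hlam
  rw [hjk] at hcross
  have b1 : ‖Mop (n + k) ψ.conj.toL2 - Pr (Mop (n + k) ψ.conj.toL2)‖ ^ 2 ≤ ε / 2 := by
    have h1 := hN1 (n + k) (by omega)
    calc _ ≤ Real.sqrt (ε / 2) ^ 2 := pow_le_pow_left₀ (norm_nonneg _) h1 2
      _ = ε / 2 := Real.sq_sqrt (by linarith)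
  have b2 : ‖Mop (n + j) φ.conj.toL2 - Pr (Mop (n + j) φ.conj.toL2)‖ ^ 2 ≤ ε / 2 := by
    have h2 := hN2 (n + j) (by omega)
    calc _ ≤ Real.sqrt (ε / 2) ^ 2 := pow_le_pow_left₀ (norm_nonneg _) h2 2
      _ = ε / 2 := Real.sq_sqrt (by linarith)
  linarith

theorem dd_eq {φ ψ : SymbolS}
    (h : Hyponormal (block2 (toeplitzS shiftSymbolS) (toeplitzS φ) (toeplitzS ψ)
      (toeplitzS coshiftSymbolS)))
    (m : ℤ) : dd φ ψ (m - 1) = dd φ ψ (m + 1) := by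
  have h1 := dd_lim h m (lam := 1) (by simp)
  have h2 := dd_lim h m (lam := -1) (by simp)
  have h3 := dd_lim h m (lam := Complex.I) (by simp)
  have h4 := dd_lim h m (lam := -Complex.I) (by simp)
  rw [one_mul] at h1
  rw [neg_mul, one_mul, Complex.neg_re] at h2
  rw [Complex.mul_re, Complex.I_re, Complex.I_im] at h3
  rw [neg_mul, Complex.neg_re, Complex.mul_re, Complex.I_re, Complex.I_im] at h4
  have hre : (dd φ ψ (m - 1) - dd φ ψ (m + 1)).re = 0 := by linarith
  have him : (dd φ ψ (m - 1) - dd φ ψ (m + 1)).im = 0 := by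
    simp only [zero_mul, one_mul, zero_sub, neg_neg] at h3 h4
    linarith
  exact sub_eq_zero.mp (Complex.ext hre him)

theorem dd_zero {φ ψ : SymbolS}
    (h : Hyponormal (block2 (toeplitzS shiftSymbolS) (toeplitzS φ) (toeplitzS ψ)
      (toeplitzS coshiftSymbolS)))
    (m : ℤ) : dd φ ψ m = 0 := by
  have hstep : ∀ p : ℤ, dd φ ψ p = dd φ ψ (p + 2) := by
    intro p
    have h1 := dd_eq h (p + 1)
    rw [show p + 1 - 1 = p by ring, show p + 1 + 1 = p + 2 by ring] at h1
    exact h1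
  have hconst : ∀ K : ℕ, dd φ ψ m = dd φ ψ (m + 2 * K) := by
    intro K
    induction K with
    | zero => simp
    | succ K ih =>
        rw [ih, hstep (m + 2 * K)]
        congr 1
        push_cast
        ring
  have t1 : Filter.Tendsto (fun K : ℕ => ⟪eL (m + 2 * K), φ.toL2⟫)
      Filter.atTop (nhds 0) :=
    tendsto_inner_eL _ (fun a b hab => by omega)
  have t2 : Filter.Tendsto (fun K : ℕ => ⟪eL (-(m + 2 * K)), ψ.toL2⟫)
      Filter.atTop (nhds 0) :=
    tendsto_inner_eL _ (fun a b hab => by omega)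
  have t3 : Filter.Tendsto (fun K : ℕ => conj ⟪eL (-(m + 2 * K)), ψ.toL2⟫)
      Filter.atTop (nhds 0) := by
    have h3 := (Complex.continuous_conj.tendsto 0).comp t2
    simp only [map_zero] at h3
    exact Filter.Tendsto.congr (fun K => rfl) h3
  have t : Filter.Tendsto (fun K : ℕ => dd φ ψ (m + 2 * K)) Filter.atTop (nhds 0) := by
    have h4 := t1.add t3
    simpa [dd] using h4
  have tconst : Filter.Tendsto (fun K : ℕ => dd φ ψ (m + 2 * K)) Filter.atTop
      (nhds (dd φ ψ m)) := by
    have : (fun K : ℕ => dd φ ψ (m + 2 * K)) = fun _ => dd φ ψ m := by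
      funext K
      exact (hconst K).symm
    rw [this]
    exact tendsto_const_nhds
  exact tendsto_nhds_unique tconst t

theorem phi_eq_neg {φ ψ : SymbolS}
    (h : Hyponormal (block2 (toeplitzS shiftSymbolS) (toeplitzS φ) (toeplitzS ψ)
      (toeplitzS coshiftSymbolS))) :
    φ.toL2 = - ψ.conj.toL2 := by
  have hz : φ.toL2 + ψ.conj.toL2 = 0 := by
    apply eq_zero_of_inner_eL
    intro m
    rw [inner_add_right, inner_eL_conj]
    exact dd_zero h m
  exact eq_neg_of_add_eq_zero_left hz
/-- **Statement 19.** There is no hyponormal Toeplitz completion of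
`[[T_z, ?], [?, T_z̄]]`: for any `φ, ψ ∈ L^∞` the block Toeplitz operator
`[[T_z, T_φ], [T_ψ, T_z̄]]` on `H² ⊕ H²` is not hyponormal. -/
theorem statement19 (φ ψ : SymbolS) :
    ¬ Hyponormal
        (block2 (toeplitzS shiftSymbolS) (toeplitzS φ) (toeplitzS ψ)
          (toeplitzS coshiftSymbolS)) := by
  intro h
  have hphi : φ.toL2 = - ψ.conj.toL2 := phi_eq_neg h
  have hkey := key_ineq h (Submodule.zero_mem hardyS) (eL_mem_hardy (le_refl 0))
  have h1 : Pr (Mop (-1) (0 : L2S)) = 0 := by rw [map_zero, map_zero]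
  have h2 : Pr (ψ.conj.mulLp (eL 0)) = Pr ψ.conj.toL2 := by
    rw [mulLp_eL, Mop_zero_apply]
  have h3 : Pr (φ.conj.mulLp (0 : L2S)) = 0 := by rw [map_zero, map_zero]
  have h4 : Pr (Mop 1 (eL 0)) = eL 1 := by
    rw [Mop_eL, show (1 : ℤ) + 0 = 1 by ring]
    exact Pr_of_mem (eL_mem_hardy (by norm_num))
  have h5 : Pr (Mop 1 (0 : L2S)) = 0 := by rw [map_zero, map_zero]
  have h6 : Pr (φ.mulLp (eL 0)) = Pr φ.toL2 := by rw [mulLp_eL, Mop_zero_apply]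
  have h7 : Pr (ψ.mulLp (0 : L2S)) = 0 := by rw [map_zero, map_zero]
  have h8 : Pr (Mop (-1) (eL 0)) = 0 := by
    rw [Mop_eL, show (-1 : ℤ) + 0 = -1 by ring]
    exact Pr_of_mem_orth (eL_mem_orth (by norm_num))
  rw [h1, h2, h3, h4, h5, h6, h7, h8, zero_add, zero_add, zero_add, add_zero] at hkey
  rw [hphi, map_neg, norm_neg, norm_eL, norm_zero] at hkey
  norm_num at hkey

end BlockToeplitz
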